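/- arXiv:2110.02159 — 7 statements merged into one kernel-verified Lean document; each statement's English description precedes it below -/
import Mathlib

section
/- Let K ≥ 1, β ∈ [0,1), and let q ∈ ℝ^K be a probability vector (nonnegative entries summing to 1). Define the matrix Q ∈ ℝ^{K×K} by Q[y',y] = (1-β)·𝟙[y'=y] + β·q(y'). Then for every unit vector v ∈ ℝ^K, ‖Qv‖₂ ≥ (1-β)/√(2K). In particular the minimum singular value of Q is at least (1-β)/√(2K). -/
open Finset Real

lemma core (k Q2 b s c : ℝ) (hk : 1 ≤ k) (hW : 0 ≤ k * Q2 - 1)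
    (hb0 : 0 ≤ b) (hb1 : b ≤ 1)
    (h1 : (k*c - s)^2 ≤ (k*Q2 - 1) * (k - s^2)) :
    (1-b)^2 ≤ ((1-b)^2 + 2*b*(1-b)*s*c + b^2*Q2*s^2) * (2 - 2*b + b^2*k*Q2) := by
  have hd0 : (0:ℝ) ≤ 1 - b := by linarith
  rcases eq_or_lt_of_le hW with hW0 | hWpos
  · -- k*Q2 = 1 case
    have hkQ2 : k * Q2 = 1 := by linarith
    have hkc : k * c = s := by nlinarith [sq_nonneg (k*c - s)]
    subst hkc
    have hc2 : (0:ℝ) ≤ k * c^2 := by positivity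
    have e2 : Q2*(k*c)^2 = k*c^2 := by linear_combination (k*c^2)*hkQ2
    have hf_ge : (1-b)^2 ≤ (1-b)^2 + 2*b*(1-b)*(k*c)*c + b^2*Q2*(k*c)^2 := by
      nlinarith [mul_nonneg (mul_nonneg hb0 hd0) hc2, mul_nonneg (mul_nonneg hb0 hb0) hc2, e2]
    have hT_ge : (1:ℝ) ≤ 2 - 2*b + b^2*k*Q2 := by nlinarith [sq_nonneg (1-b), hkQ2, sq_nonneg b]
    have hf0 : (0:ℝ) ≤ (1-b)^2 + 2*b*(1-b)*(k*c)*c + b^2*Q2*(k*c)^2 :=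
      le_trans (sq_nonneg _) hf_ge
    calc (1-b)^2 ≤ (1-b)^2 + 2*b*(1-b)*(k*c)*c + b^2*Q2*(k*c)^2 := hf_ge
      _ ≤ ((1-b)^2 + 2*b*(1-b)*(k*c)*c + b^2*Q2*(k*c)^2) * (2 - 2*b + b^2*k*Q2) :=
          le_mul_of_one_le_right hf0 hT_ge
  · rcases eq_or_lt_of_le hd0 with hdz | hdpos
    · -- b = 1
      have hb : b = 1 := by linarith
      subst hb
      have : ((1:ℝ)-1)^2 + 2*1*(1-1)*s*c + 1^2*Q2*s^2 = Q2*s^2 := by ring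
      rw [this]
      have hQ2 : 0 ≤ Q2 := by nlinarith
      have h2 : 0 ≤ Q2*s^2 := by positivity
      nlinarith [mul_nonneg h2 (by nlinarith : (0:ℝ) ≤ 2 - 2*1 + 1^2*k*Q2)]
    · -- main case
      have hupos : (0:ℝ) < (1-b)^2 := by positivity
      have hpos : (0:ℝ) < (((1-b)^2 + b^2*(k*Q2-1)) * k * (k*Q2-1)) := by positivity
      have key : (((1-b)^2 + 2*b*(1-b)*s*c + b^2*Q2*s^2) * (2 - 2*b + b^2*k*Q2) - (1-b)^2)
          * (((1-b)^2 + b^2*(k*Q2-1)) * k * (k*Q2-1))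
          = ((1 + (1-b)^2 + b^2*(k*Q2-1))*b*s*(k*Q2-1)
              + ((1-b)^2 + b^2*(k*Q2-1))*(1-b)*(k*c - s))^2
            + (1-b)^2*((1-b)^2 + b^2*(k*Q2-1))^2*((k*Q2-1)*(k-s^2) - (k*c-s)^2)
            + (1-b)^2*s^2*(k*Q2-1) := by ring
      have rhs_nonneg : (0:ℝ) ≤ ((1 + (1-b)^2 + b^2*(k*Q2-1))*b*s*(k*Q2-1)
              + ((1-b)^2 + b^2*(k*Q2-1))*(1-b)*(k*c - s))^2
            + (1-b)^2*((1-b)^2 + b^2*(k*Q2-1))^2*((k*Q2-1)*(k-s^2) - (k*c-s)^2)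
            + (1-b)^2*s^2*(k*Q2-1) := by
        have t1 := sq_nonneg ((1 + (1-b)^2 + b^2*(k*Q2-1))*b*s*(k*Q2-1)
              + ((1-b)^2 + b^2*(k*Q2-1))*(1-b)*(k*c - s))
        have t2 : (0:ℝ) ≤ (1-b)^2*((1-b)^2 + b^2*(k*Q2-1))^2*((k*Q2-1)*(k-s^2) - (k*c-s)^2) :=
          mul_nonneg (by positivity) (by linarith)
        have t3 : (0:ℝ) ≤ (1-b)^2*s^2*(k*Q2-1) := by positivity
        linarith
      have h4 : (0:ℝ) ≤ (((1-b)^2 + 2*b*(1-b)*s*c + b^2*Q2*s^2) * (2 - 2*b + b^2*k*Q2) - (1-b)^2) := by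
        have h5 : (0:ℝ) ≤ (((1-b)^2 + 2*b*(1-b)*s*c + b^2*Q2*s^2) * (2 - 2*b + b^2*k*Q2) - (1-b)^2)
            * (((1-b)^2 + b^2*(k*Q2-1)) * k * (k*Q2-1)) := key ▸ rhs_nonneg
        exact (mul_nonneg_iff_of_pos_right hpos).mp h5
      linarith

theorem stmt_0 (K : ℕ) (hK : 1 ≤ K) (β : ℝ) (hβ0 : 0 ≤ β) (hβ1 : β < 1)
    (q : Fin K → ℝ) (hq0 : ∀ y, 0 ≤ q y) (hq1 : ∑ y, q y = 1)
    (Q : Matrix (Fin K) (Fin K) ℝ)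
    (hQ : ∀ y' y, Q y' y = (1 - β) * (if y' = y then 1 else 0) + β * q y')
    (v : Fin K → ℝ) (hv : Real.sqrt (∑ i, v i ^ 2) = 1) :
    (1 - β) / Real.sqrt (2 * K) ≤ Real.sqrt (∑ i, (Q.mulVec v) i ^ 2) := by
  set k : ℝ := (K : ℝ) with hkdef
  have hk1 : (1:ℝ) ≤ k := by rw [hkdef]; exact_mod_cast hK
  have hk0 : (0:ℝ) < k := by linarith
  set s : ℝ := ∑ i, v i with hs
  set c : ℝ := ∑ i, q i * v i with hc
  set Q2 : ℝ := ∑ i, q i ^ 2 with hQ2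
  -- sum of squares of v is 1
  have hn : ∑ i, v i ^ 2 = 1 := by
    have h0 : (0:ℝ) ≤ ∑ i, v i ^ 2 := Finset.sum_nonneg fun i _ => sq_nonneg _
    nlinarith [Real.sq_sqrt h0, hv]
  -- entries of Q.mulVec v
  have hmv : ∀ i, Q.mulVec v i = (1-β) * v i + β * s * q i := by
    intro i
    simp only [Matrix.mulVec, dotProduct, hQ]
    have : ∀ y, ((1 - β) * (if i = y then 1 else 0) + β * q i) * v y
        = (1-β) * (if i = y then v y else 0) + β * q i * v y := by
      intro y; by_cases h : i = y <;> simp [h] <;> ring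
    rw [Finset.sum_congr rfl fun y _ => this y, Finset.sum_add_distrib,
      ← Finset.mul_sum, Finset.sum_ite_eq, ← Finset.mul_sum]
    simp [hs]
    ring
  -- sum of squares identity
  have ht2 : ∑ i, (Q.mulVec v) i ^ 2
      = (1-β)^2 + 2*β*(1-β)*s*c + β^2*Q2*s^2 := by
    have : ∀ i, (Q.mulVec v) i ^ 2
        = (1-β)^2 * v i ^ 2 + 2*β*(1-β)*s*(q i * v i) + β^2*s^2*(q i ^2) := by
      intro i; rw [hmv i]; ring
    rw [Finset.sum_congr rfl fun i _ => this i, Finset.sum_add_distrib,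
      Finset.sum_add_distrib, ← Finset.mul_sum, ← Finset.mul_sum, ← Finset.mul_sum]
    rw [hn]
    ring
  -- Cauchy-Schwarz facts
  have hcard : (Finset.univ : Finset (Fin K)).card = K := by simp
  have hW : 0 ≤ k * Q2 - 1 := by
    have cs := Finset.sum_mul_sq_le_sq_mul_sq Finset.univ q (fun _ => (1:ℝ))
    simp only [mul_one, one_pow, Finset.sum_const, hcard, nsmul_eq_mul] at cs
    rw [hq1] at cs
    rw [hQ2, hkdef]
    nlinarith [cs]
  have h1 : (k*c - s)^2 ≤ (k*Q2 - 1) * (k - s^2) := by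
    have cs := Finset.sum_mul_sq_le_sq_mul_sq Finset.univ
      (fun i => q i - 1/k) (fun i => v i - s/k)
    have e1 : ∑ i, (q i - 1/k) * (v i - s/k) = c - s/k := by
      have : ∀ i, (q i - 1/k) * (v i - s/k)
          = q i * v i - (s/k) * q i - (1/k) * v i + s/k^2 := fun i => by ring
      rw [Finset.sum_congr rfl fun i _ => this i, Finset.sum_add_distrib,
        Finset.sum_sub_distrib, Finset.sum_sub_distrib, ← Finset.mul_sum, ← Finset.mul_sum,
        hq1, ← hs, ← hc, Finset.sum_const, hcard, nsmul_eq_mul, ← hkdef]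
      field_simp
      ring
    have e2 : ∑ i, (q i - 1/k) ^ 2 = Q2 - 1/k := by
      have : ∀ i, (q i - 1/k)^2 = q i ^2 - 2/k * q i + 1/k^2 := fun i => by ring
      rw [Finset.sum_congr rfl fun i _ => this i]
      rw [Finset.sum_add_distrib, Finset.sum_sub_distrib, ← Finset.mul_sum, hq1,
        Finset.sum_const, hcard, nsmul_eq_mul, ← hQ2]
      field_simp
      ring
    have e3 : ∑ i, (v i - s/k) ^ 2 = 1 - s^2/k := by
      have : ∀ i, (v i - s/k)^2 = v i ^2 - 2*(s/k) * v i + s^2/k^2 := fun i => by ring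
      rw [Finset.sum_congr rfl fun i _ => this i]
      rw [Finset.sum_add_distrib, Finset.sum_sub_distrib, ← Finset.mul_sum, ← hs, hn,
        Finset.sum_const, hcard, nsmul_eq_mul, ← hkdef]
      field_simp
      ring
    rw [e1, e2, e3] at cs
    have hkne : k ≠ 0 := ne_of_gt hk0
    have expand1 : (k*c - s)^2 = (c - s/k)^2 * k^2 := by field_simp
    have expand2 : (k*Q2 - 1) * (k - s^2) = ((Q2 - 1/k) * (1 - s^2/k)) * k^2 := by
      field_simp
    rw [expand1, expand2]
    exact mul_le_mul_of_nonneg_right cs (by positivity)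
  have hQ2le : Q2 ≤ 1 := by
    have hqle : ∀ i, q i ≤ 1 := by
      intro i
      calc q i ≤ ∑ y, q y := Finset.single_le_sum (fun y _ => hq0 y) (Finset.mem_univ i)
        _ = 1 := hq1
    calc Q2 = ∑ i, q i ^ 2 := hQ2
      _ ≤ ∑ i, q i := Finset.sum_le_sum fun i _ => by nlinarith [hq0 i, hqle i]
      _ = 1 := hq1
  -- apply core
  have hcore := core k Q2 β s c hk1 hW hβ0 (le_of_lt hβ1) h1
  rw [← ht2] at hcore
  have hT2k : 2 - 2*β + β^2*k*Q2 ≤ 2*k := by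
    have e1 : β^2*k*Q2 ≤ β*k := by
      nlinarith [mul_nonneg (mul_nonneg hβ0 hβ0) hk0.le, mul_nonneg hβ0 hk0.le,
        mul_nonneg (mul_nonneg hβ0 hβ0) (mul_nonneg hk0.le (sub_nonneg.2 hQ2le))]
    nlinarith [mul_nonneg (by linarith : (0:ℝ) ≤ k - 1) (by linarith : (0:ℝ) ≤ 2 - β)]
  have htnn : 0 ≤ ∑ i, (Q.mulVec v) i ^ 2 := Finset.sum_nonneg fun i _ => sq_nonneg _
  have hfin : (1-β)^2 ≤ (∑ i, (Q.mulVec v) i ^ 2) * (2*k) := by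
    calc (1-β)^2 ≤ (∑ i, (Q.mulVec v) i ^ 2) * (2 - 2*β + β^2*k*Q2) := hcore
      _ ≤ (∑ i, (Q.mulVec v) i ^ 2) * (2*k) := mul_le_mul_of_nonneg_left hT2k htnn
  -- conclude with sqrt
  have h2k : (0:ℝ) < 2*k := by linarith
  rw [Real.le_sqrt (div_nonneg (by linarith) (Real.sqrt_nonneg _)) htnn]
  rw [div_pow, Real.sq_sqrt (by positivity : (0:ℝ) ≤ 2*(K:ℝ))]
  rw [div_le_iff₀ (by positivity)]
  calc (1-β)^2 ≤ (∑ i, (Q.mulVec v) i ^ 2) * (2*k) := hfin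
    _ = (∑ i, (Q.mulVec v) i ^ 2) * (2*(K:ℝ)) := by rw [hkdef]
end

section
/- For all real x ≥ 2: (1 + 1/x)^x ≤ e + 3/x. -/
theorem stmt_4 (x : ℝ) (hx : 2 ≤ x) :
    (1 + 1 / x) ^ x ≤ Real.exp 1 + 3 / x := by
  have hx0 : (0:ℝ) < x := by linarith
  have h1 : (1 + 1 / x : ℝ) ^ x ≤ Real.exp (1 / x) ^ x :=
    Real.rpow_le_rpow (by positivity)
      (by simpa [add_comm] using Real.add_one_le_exp (1 / x)) hx0.le
  have h2 : Real.exp (1 / x) ^ x = Real.exp 1 := by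
    rw [← Real.exp_one_rpow (1 / x), ← Real.rpow_mul (Real.exp_pos 1).le]
    field_simp
    rw [Real.rpow_one]
  have h3 : (0:ℝ) ≤ 3 / x := by positivity
  calc (1 + 1 / x : ℝ) ^ x ≤ Real.exp 1 := h2 ▸ h1
    _ ≤ Real.exp 1 + 3 / x := by linarith
end

section
/- For all real x ≥ 2: (1 - 1/x)^{-x} ≤ e + 3/x. -/
open Real Finset

set_option maxHeartbeats 800000 in
lemma stmt_5_aux (t : ℝ) (ht0 : 0 < t) (ht2 : t ≤ 1/2) :
    (1 - t) ^ (-(1/t)) ≤ Real.exp 1 + 3 * t := by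
  have hb : 0 < 1 - t := by linarith
  have habs : |t| < 1 := by rw [abs_of_pos ht0]; linarith
  -- power bounds
  have p2 : t^2 ≤ (1/2) * t := by nlinarith
  have p3 : t^3 ≤ (1/2) * t^2 := by nlinarith [pow_nonneg ht0.le 2]
  have p4 : t^4 ≤ (1/2) * t^3 := by nlinarith [pow_nonneg ht0.le 3]
  have p5 : t^5 ≤ (1/2) * t^4 := by nlinarith [pow_nonneg ht0.le 4]
  have p6 : t^6 ≤ (1/2) * t^5 := by nlinarith [pow_nonneg ht0.le 5]
  have p7 : t^7 ≤ (1/2) * t^6 := by nlinarith [pow_nonneg ht0.le 6]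
  -- log series bound with n = 6
  have hlog := Real.abs_log_sub_add_sum_range_le habs 6
  rw [abs_of_pos ht0] at hlog
  have hsum : (∑ i ∈ range 6, t ^ (i + 1) / ((i : ℝ) + 1)) =
      t + t^2/2 + t^3/3 + t^4/4 + t^5/5 + t^6/6 := by
    rw [Finset.sum_range_succ, Finset.sum_range_succ, Finset.sum_range_succ,
      Finset.sum_range_succ, Finset.sum_range_succ, Finset.sum_range_succ,
      Finset.sum_range_zero]
    norm_num
  rw [hsum] at hlog
  norm_num at hlog
  set v : ℝ := t/2 + t^2/3 + t^3/4 + t^4/5 + t^5/6 + t^6/(1-t) with hv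
  clear_value v
  have h1 : -(Real.log (1 - t)) ≤ t + t^2/2 + t^3/3 + t^4/4 + t^5/5 + t^6/6
      + t^7/(1-t) := by
    have := (abs_le.1 hlog).1
    linarith
  have hlog2 : -(1/t) * Real.log (1 - t) ≤ 1 + v := by
    have h3 : (1/t) * (-(Real.log (1 - t))) ≤
        (1/t) * (t + t^2/2 + t^3/3 + t^4/4 + t^5/5 + t^6/6 + t^7/(1-t)) :=
      mul_le_mul_of_nonneg_left h1 (by positivity)
    have h4 : (1/t) * (t + t^2/2 + t^3/3 + t^4/4 + t^5/5 + t^6/6 + t^7/(1-t))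
        = 1 + v := by
      rw [hv]
      field_simp
      ring
    calc -(1/t) * Real.log (1 - t) = (1/t) * (-(Real.log (1 - t))) := by ring
    _ ≤ 1 + v := by rw [← h4]; exact h3
  -- bounds on v
  have h6 : t^6/(1-t) ≤ 2 * t^6 := by
    rw [div_le_iff₀ hb]; nlinarith [pow_nonneg ht0.le 6]
  have hvub : v ≤ (83/100) * t := by
    rw [hv]; linarith
  have hv0 : 0 ≤ v := by rw [hv]; positivity
  have hv1 : v ≤ 42/100 := by
    have : (83/100 : ℝ) * t ≤ 83/200 := by linarith
    linarith
  -- exp bound: exp v ≤ 1 + v + (3/4) v^2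
  have hexpv : Real.exp v ≤ 1 + v + (3/4) * v^2 := by
    have h := Real.exp_bound' hv0 (by linarith) (n := 2) (by norm_num)
    rw [Finset.sum_range_succ, Finset.sum_range_succ, Finset.sum_range_zero] at h
    norm_num at h
    linarith
  -- main chain
  rw [Real.rpow_def_of_pos hb, mul_comm]
  have e1 : Real.exp (-(1/t) * Real.log (1-t)) ≤ Real.exp (1 + v) :=
    Real.exp_le_exp.2 hlog2
  refine e1.trans ?_
  rw [Real.exp_add]
  have he : Real.exp 1 ≤ 2.7183 := by
    have := Real.exp_one_lt_d9
    linarith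
  have he0 : (0:ℝ) < Real.exp 1 := Real.exp_pos 1
  have h1' : Real.exp 1 * Real.exp v ≤ Real.exp 1 * (1 + v + (3/4)*v^2) :=
    mul_le_mul_of_nonneg_left hexpv he0.le
  have h3 : v + (3/4)*v^2 ≤ (83/100)*t + (3/4)*((83/100)*t)*(42/100) := by
    nlinarith
  have hw0 : 0 ≤ v + (3/4)*v^2 := by positivity
  have h4 : Real.exp 1 * (v + (3/4)*v^2)
      ≤ 2.7183 * ((83/100)*t + (3/4)*((83/100)*t)*(42/100)) :=
    mul_le_mul he h3 hw0 (by norm_num)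
  nlinarith

theorem stmt_5 (x : ℝ) (hx : 2 ≤ x) :
    (1 - 1 / x) ^ (-x) ≤ Real.exp 1 + 3 / x := by
  have hx0 : 0 < x := by linarith
  have h := stmt_5_aux (1/x) (by positivity) (by rw [div_le_div_iff₀ hx0 (by norm_num)]; linarith)
  have e1 : -(1/(1/x)) = -x := by field_simp
  have e2 : 3 * (1/x) = 3 / x := by ring
  rw [e1, e2] at h
  exact h
end

section
/- For all real x ≥ 2: (1 + 1/x)^{√x} ≤ 1 + 3/√x. -/
lemma exp_le_one_add_three_mul {t : ℝ} (h0 : 0 ≤ t) (h1 : t ≤ 1) :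
    Real.exp t ≤ 1 + 3 * t := by
  have h := Real.exp_bound' h0 h1 (n := 2) (by norm_num)
  simp [Finset.sum_range_succ, Nat.factorial] at h
  nlinarith [sq_nonneg t]

theorem stmt_6 (x : ℝ) (hx : 2 ≤ x) :
    (1 + 1 / x) ^ Real.sqrt x ≤ 1 + 3 / Real.sqrt x := by
  have hx0 : (0:ℝ) < x := by linarith
  have hs0 : 0 < Real.sqrt x := Real.sqrt_pos.mpr hx0
  set s := Real.sqrt x with hs
  have hs2 : s * s = x := Real.mul_self_sqrt hx0.le
  have hs1 : 1 ≤ s := by nlinarith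
  have hpos : (0:ℝ) < 1 + 1 / x := by positivity
  have hlog : Real.log (1 + 1 / x) ≤ 1 / x := by
    have := Real.log_le_sub_one_of_pos hpos
    linarith
  have key : (1 + 1 / x) ^ s = Real.exp (Real.log (1 + 1 / x) * s) :=
    Real.rpow_def_of_pos hpos s
  rw [key]
  have harg : Real.log (1 + 1 / x) * s ≤ 1 / s := by
    have h1 : Real.log (1 + 1 / x) * s ≤ (1 / x) * s :=
      mul_le_mul_of_nonneg_right hlog hs0.le
    have h2 : (1 / x) * s = 1 / s := by
      field_simp
      nlinarith
    linarith
  calc Real.exp (Real.log (1 + 1 / x) * s) ≤ Real.exp (1 / s) :=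
        Real.exp_le_exp.mpr harg
    _ ≤ 1 + 3 * (1 / s) := by
        apply exp_le_one_add_three_mul (by positivity)
        rw [div_le_one hs0]; linarith
    _ = 1 + 3 / s := by ring
end

section
/- For all real x ≥ 2: (1 - 1/x)^{-√x} ≤ 1 + 3/√x. -/
theorem stmt_7 (x : ℝ) (hx : 2 ≤ x) :
    (1 - 1 / x) ^ (-Real.sqrt x) ≤ 1 + 3 / Real.sqrt x := by
  have hx0 : (0:ℝ) < x := by linarith
  have hs0 : 0 < Real.sqrt x := Real.sqrt_pos.mpr hx0
  have hsq : Real.sqrt x * Real.sqrt x = x := Real.mul_self_sqrt hx0.le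
  have hb0 : (0:ℝ) < 1 - 1 / x := by
    have : 1 / x < 1 := by
      rw [div_lt_one hx0]; linarith
    linarith
  rcases le_or_gt x (9/4) with hle | hgt
  · -- small case: x ≤ 9/4
    have hsle : Real.sqrt x ≤ 3/2 := by
      have : Real.sqrt x ≤ Real.sqrt (9/4) := Real.sqrt_le_sqrt hle
      calc Real.sqrt x ≤ Real.sqrt (9/4) := this
        _ = 3/2 := by
          rw [show (9:ℝ)/4 = (3/2)^2 by norm_num, Real.sqrt_sq (by norm_num)]
    have hbhalf : (1:ℝ)/2 ≤ 1 - 1/x := by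
      have : 1 / x ≤ 1/2 := by
        rw [div_le_div_iff₀ hx0 (by norm_num)]; linarith
      linarith
    have h1 : (1 - 1/x) ^ (-Real.sqrt x) ≤ ((1:ℝ)/2) ^ (-Real.sqrt x) := by
      apply Real.rpow_le_rpow_of_nonpos (by norm_num) hbhalf (by linarith)
    have h2 : ((1:ℝ)/2) ^ (-Real.sqrt x) = (2:ℝ) ^ (Real.sqrt x) := by
      rw [one_div, Real.inv_rpow (by norm_num), Real.rpow_neg (by norm_num), inv_inv]
    have h3 : (2:ℝ) ^ (Real.sqrt x) ≤ (2:ℝ) ^ ((3:ℝ)/2) := by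
      apply Real.rpow_le_rpow_of_exponent_le (by norm_num) hsle
    have h4 : (2:ℝ) ^ ((3:ℝ)/2) ≤ 3 := by
      have e1 : (2:ℝ) ^ ((3:ℝ)/2) = ((2:ℝ) ^ (3:ℝ)) ^ ((1:ℝ)/2) := by
        rw [← Real.rpow_mul (by norm_num)]; norm_num
      have e2 : (2:ℝ) ^ (3:ℝ) = 8 := by
        rw [show (3:ℝ) = ((3:ℕ):ℝ) by norm_num, Real.rpow_natCast]; norm_num
      rw [e1, e2, ← Real.sqrt_eq_rpow]
      calc Real.sqrt 8 ≤ Real.sqrt 9 := Real.sqrt_le_sqrt (by norm_num)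
        _ = 3 := by rw [show (9:ℝ) = 3^2 by norm_num, Real.sqrt_sq (by norm_num)]
    have h5 : (3:ℝ) ≤ 1 + 3 / Real.sqrt x := by
      have : 2 ≤ 3 / Real.sqrt x := by
        rw [le_div_iff₀ hs0]; linarith
      linarith
    linarith
  · -- large case
    have hs32 : (3:ℝ)/2 ≤ Real.sqrt x := by
      have := Real.sqrt_le_sqrt hgt.le
      calc (3:ℝ)/2 = Real.sqrt (9/4) := by
            rw [show (9:ℝ)/4 = (3/2)^2 by norm_num, Real.sqrt_sq (by norm_num)]
        _ ≤ Real.sqrt x := this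
    have hbern : 1 - 1 / Real.sqrt x ≤ (1 - 1/x) ^ (Real.sqrt x) := by
      have := one_add_mul_self_le_rpow_one_add (s := -(1/x))
        (by rw [neg_le, neg_neg]; nlinarith [hb0]) (p := Real.sqrt x) (by linarith)
      have he : Real.sqrt x * (1/x) = 1 / Real.sqrt x := by
        rw [mul_one_div, eq_div_iff hs0.ne', div_mul_eq_mul_div, hsq, div_self hx0.ne']
      calc 1 - 1 / Real.sqrt x = 1 + Real.sqrt x * -(1/x) := by
            rw [mul_neg, he]; ring
        _ ≤ (1 + -(1/x)) ^ Real.sqrt x := this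
        _ = (1 - 1/x) ^ Real.sqrt x := by rw [← sub_eq_add_neg]
    have hd0 : 0 < 1 - 1 / Real.sqrt x := by
      have : 1 / Real.sqrt x ≤ 2/3 := by
        rw [div_le_div_iff₀ hs0 (by norm_num)]; linarith
      linarith
    have key : (1 - 1/x) ^ (-Real.sqrt x) ≤ (1 - 1/Real.sqrt x)⁻¹ := by
      rw [Real.rpow_neg hb0.le]
      apply inv_anti₀ hd0 hbern
    have final : (1 - 1/Real.sqrt x)⁻¹ ≤ 1 + 3 / Real.sqrt x := by
      rw [inv_le_iff_one_le_mul₀ hd0]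
      have ht0 : 0 < 1 / Real.sqrt x := by positivity
      have ht23 : 1 / Real.sqrt x ≤ 2/3 := by
        rw [div_le_div_iff₀ hs0 (by norm_num)]; linarith
      have hexp : (1 + 3 / Real.sqrt x) * (1 - 1 / Real.sqrt x)
          = 1 + 2 * (1 / Real.sqrt x) - 3 * (1 / Real.sqrt x)^2 := by ring
      nlinarith [mul_nonneg ht0.le (by linarith : (0:ℝ) ≤ 2 - 3 * (1 / Real.sqrt x))]
    linarith
end

section
/- Let n, t, s be positive integers with t = θ·n for θ ∈ (0,1], let α ∈ (0,1/2], p ∈ (0,1), q = 1-p, suppose nq ≥ sα ≥ 2, and let ξ ∈ [0, 3α√(θs(1-α))]. Then for every integer k with tp - ξ√(tq) ≤ k ≤ t, the binomial density ratio f(k; t, p)/f(k; t, p + 1/n) ≤ (e + 3/(sα))^θ · (1 + 3/√(sα))^{√θ·ξ}. -/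
set_option maxHeartbeats 1000000

open Real

/-- If `F 0 = 0` and `F` has nonnegative derivative on `[0,∞)`, then `F ≥ 0` there. -/
lemma aux_nonneg_of_deriv (F F' : ℝ → ℝ) (h0 : F 0 = 0)
    (hd : ∀ x : ℝ, 0 ≤ x → HasDerivAt F (F' x) x)
    (hge : ∀ x : ℝ, 0 ≤ x → 0 ≤ F' x) {v : ℝ} (hv : 0 ≤ v) : 0 ≤ F v := by
  have hmono : MonotoneOn F (Set.Ici (0:ℝ)) := by
    apply monotoneOn_of_hasDerivWithinAt_nonneg (f' := F') (convex_Ici 0)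
    · intro x hx
      exact ((hd x hx).continuousAt).continuousWithinAt
    · intro x hx
      rw [interior_Ici] at hx
      exact (hd x (le_of_lt hx)).hasDerivWithinAt
    · intro x hx
      rw [interior_Ici] at hx
      exact hge x (le_of_lt hx)
  have := hmono (Set.self_mem_Ici) (by exact hv) hv
  linarith [h0 ▸ this]

lemma aux_log_cubic {v : ℝ} (hv : 0 ≤ v) : Real.log (1+v) ≤ v - v^2/2 + v^3/3 := by
  have h := aux_nonneg_of_deriv (fun v => v - v^2/2 + v^3/3 - Real.log (1+v))
      (fun x => 1 - x + x^2 - 1/(1+x)) (by norm_num) ?_ ?_ hv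
  · linarith [h]
  · intro x hx
    have h1 : (0:ℝ) < 1 + x := by linarith
    have hlog : HasDerivAt (fun v : ℝ => Real.log (1+v)) (1/(1+x)) x := by
      have := ((hasDerivAt_id x).const_add 1).log (ne_of_gt h1)
      simpa using this
    have hpoly : HasDerivAt (fun v : ℝ => v - v^2/2 + v^3/3) (1 - x + x^2) x := by
      have h2 := (hasDerivAt_pow 2 x).div_const 2
      have h3 := (hasDerivAt_pow 3 x).div_const 3
      have := ((hasDerivAt_id x).sub h2).add h3
      refine this.congr_deriv ?_
      push_cast
      ring
    exact hpoly.sub hlog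
  · intro x hx
    have h1 : (0:ℝ) < 1 + x := by linarith
    rw [sub_nonneg, div_le_iff₀ h1]
    nlinarith

lemma aux_log_A {v : ℝ} (hv : 0 ≤ v) :
    (1+v) * Real.log (1+v) ≤ v + v^2/2 - v^3/6 + v^4/12 := by
  have h := aux_nonneg_of_deriv
      (fun v => v + v^2/2 - v^3/6 + v^4/12 - (1+v) * Real.log (1+v))
      (fun x => (x - x^2/2 + x^3/3) - Real.log (1+x)) (by norm_num) ?_ ?_ hv
  · linarith [h]
  · intro x hx
    have h1 : (0:ℝ) < 1 + x := by linarith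
    have hlog : HasDerivAt (fun v : ℝ => Real.log (1+v)) (1/(1+x)) x := by
      have := ((hasDerivAt_id x).const_add 1).log (ne_of_gt h1)
      simpa using this
    have hprod : HasDerivAt (fun v : ℝ => (1+v) * Real.log (1+v))
        (Real.log (1+x) + 1) x := by
      have := (((hasDerivAt_id x).const_add 1)).mul hlog
      refine this.congr_deriv ?_
      field_simp [id]
      simp only [id_eq]; ring
    have hpoly : HasDerivAt (fun v : ℝ => v + v^2/2 - v^3/6 + v^4/12)
        (1 + x - x^2/2 + x^3/3) x := by
      have h2 := (hasDerivAt_pow 2 x).div_const 2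
      have h3 := (hasDerivAt_pow 3 x).div_const 6
      have h4 := (hasDerivAt_pow 4 x).div_const 12
      have := (((hasDerivAt_id x).add h2).sub h3).add h4
      refine this.congr_deriv ?_
      push_cast
      ring
    have := hpoly.sub hprod
    refine this.congr_deriv ?_
    ring
  · intro x hx
    have := aux_log_cubic hx
    simp only [sub_nonneg]
    linarith

lemma aux_log_B {v : ℝ} (hv : 0 ≤ v) : Real.log (1+v) ≤ v - v^2/(2*(1+v)) := by
  have h := aux_nonneg_of_deriv
      (fun v => v - v^2/(2*(1+v)) - Real.log (1+v))
      (fun x => x^2/(2*(1+x)^2)) (by norm_num) ?_ ?_ hv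
  · linarith [h]
  · intro x hx
    have h1 : (0:ℝ) < 1 + x := by linarith
    have hlog : HasDerivAt (fun v : ℝ => Real.log (1+v)) (1/(1+x)) x := by
      have := ((hasDerivAt_id x).const_add 1).log (ne_of_gt h1)
      simpa using this
    have hdiv : HasDerivAt (fun v : ℝ => v^2/(2*(1+v)))
        ((2*x*(2*(1+x)) - x^2*2)/(2*(1+x))^2) x := by
      have hg : HasDerivAt (fun v : ℝ => 2*(1+v)) 2 x := by
        have := ((hasDerivAt_id x).const_add 1).const_mul 2
        simpa using this
      have h2 : HasDerivAt (fun v : ℝ => v^2) (2*x) x := by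
        simpa using hasDerivAt_pow 2 x
      exact h2.div hg (by positivity)
    have := ((hasDerivAt_id x).sub hdiv).sub hlog
    refine this.congr_deriv ?_
    field_simp
    ring
  · intro x hx
    positivity


lemma aux_KL1 {x : ℝ} (hx : 2 ≤ x) : (x/(x-1)) ^ (x : ℝ) ≤ Real.exp 1 + 3/x := by
  have hx1 : (0:ℝ) < x - 1 := by linarith
  have hx0 : (0:ℝ) < x := by linarith
  obtain ⟨v, hvdef⟩ : ∃ v : ℝ, v = 1/(x-1) := ⟨_, rfl⟩
  have hv0 : 0 < v := by rw [hvdef]; positivity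
  have hv1 : v ≤ 1 := by rw [hvdef, div_le_one hx1]; linarith
  have hbase : x/(x-1) = 1 + v := by rw [hvdef]; field_simp; ring
  have hxv : x * v = 1 + v := by rw [hvdef]; field_simp; ring
  have h1v : (0:ℝ) < 1 + v := by linarith
  rw [hbase, Real.rpow_def_of_pos h1v]
  obtain ⟨r, hrdef⟩ : ∃ r : ℝ, r = v/2 - v^2/6 + v^3/12 := ⟨_, rfl⟩
  have hr0 : 0 ≤ r := by rw [hrdef]; nlinarith
  have hr1 : r ≤ 1 := by rw [hrdef]; nlinarith
  have hexpo : Real.log (1+v) * x ≤ 1 + r := by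
    have hA := aux_log_A hv0.le
    have hlog0 : 0 ≤ Real.log (1+v) := Real.log_nonneg (by linarith)
    -- multiply target by v > 0
    rw [← mul_le_mul_iff_left₀ hv0]
    have hL : Real.log (1+v) * x * v = (1+v) * Real.log (1+v) := by
      rw [mul_assoc, hxv]; ring
    rw [hL, hrdef]
    nlinarith
  have step1 : Real.exp (Real.log (1+v) * x) ≤ Real.exp 1 * Real.exp r := by
    rw [← Real.exp_add]
    exact Real.exp_le_exp.mpr hexpo
  have step2 : Real.exp r ≤ 1 + r + r^2/2 + 2*r^3/9 := by
    have h := Real.exp_bound' hr0 hr1 (n := 3) (by norm_num)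
    norm_num [Finset.sum_range_succ, Nat.factorial] at h
    nlinarith [pow_nonneg hr0 3]
  have hr2 : r^2 ≤ (v/2 - v^2/12)^2 := by
    have h1 : r ≤ v/2 - v^2/12 := by rw [hrdef]; nlinarith
    nlinarith
  have hr3 : r^3 ≤ (v/2)^3 := by
    have h1 : r ≤ v/2 := by rw [hrdef]; nlinarith
    nlinarith
  have hS : (r + r^2/2 + 2*r^3/9) * (1+v) ≤ (17/16) * v := by nlinarith [hrdef, hr2, hr3]
  have he : Real.exp 1 ≤ 2.7182818286 := Real.exp_one_lt_d9.le
  have hfin : Real.exp 1 * (1 + r + r^2/2 + 2*r^3/9) ≤ Real.exp 1 + 3/x := by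
    have hkey : Real.exp 1 * ((r + r^2/2 + 2*r^3/9) * (1+v)) ≤ 3*v :=
      calc Real.exp 1 * ((r + r^2/2 + 2*r^3/9) * (1+v))
          ≤ Real.exp 1 * ((17/16) * v) :=
            mul_le_mul_of_nonneg_left hS (Real.exp_pos 1).le
        _ ≤ 3*v := by nlinarith
    have h3x : 3*v/(1+v) ≤ 3/x := by
      rw [div_le_div_iff₀ h1v hx0]
      nlinarith [hxv]
    have : Real.exp 1 * (r + r^2/2 + 2*r^3/9) ≤ 3*v/(1+v) := by
      rw [le_div_iff₀ h1v]
      calc Real.exp 1 * (r + r^2/2 + 2*r^3/9) * (1+v)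
          = Real.exp 1 * ((r + r^2/2 + 2*r^3/9) * (1+v)) := by ring
        _ ≤ 3*v := hkey
    nlinarith [this, h3x]
  calc Real.exp (Real.log (1+v) * x) ≤ Real.exp 1 * Real.exp r := step1
    _ ≤ Real.exp 1 * (1 + r + r^2/2 + 2*r^3/9) :=
        mul_le_mul_of_nonneg_left step2 (Real.exp_pos 1).le
    _ ≤ Real.exp 1 + 3/x := hfin

lemma aux_KL2 {x : ℝ} (hx : 2 ≤ x) :
    (x/(x-1)) ^ (Real.sqrt x) ≤ 1 + 3/Real.sqrt x := by
  have hx1 : (0:ℝ) < x - 1 := by linarith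
  have hx0 : (0:ℝ) < x := by linarith
  obtain ⟨w, hwdef⟩ : ∃ w : ℝ, w = Real.sqrt x := ⟨_, rfl⟩
  have hw0 : 0 < w := hwdef ▸ Real.sqrt_pos.mpr hx0
  have hw2 : w^2 = x := hwdef ▸ Real.sq_sqrt hx0.le
  obtain ⟨v, hvdef⟩ : ∃ v : ℝ, v = 1/(x-1) := ⟨_, rfl⟩
  have hv0 : 0 < v := by rw [hvdef]; positivity
  have hbase : x/(x-1) = 1 + v := by rw [hvdef]; field_simp; ring
  have h1v : (0:ℝ) < 1 + v := by linarith
  rw [hbase, ← hwdef, Real.rpow_def_of_pos h1v]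
  have hB := aux_log_B hv0.le
  have hexpo : Real.log (1+v) * w ≤ 3/(2*w) := by
    have hvB : v - v^2/(2*(1+v)) = (2*x-1)/(2*x*(x-1)) := by
      rw [hvdef]; field_simp; ring
    have hlog : Real.log (1+v) ≤ (2*x-1)/(2*x*(x-1)) := by rw [← hvB]; exact hB
    have step : Real.log (1+v) * w ≤ (2*x-1)/(2*x*(x-1)) * w :=
      mul_le_mul_of_nonneg_right hlog hw0.le
    refine step.trans ?_
    rw [div_mul_eq_mul_div, div_le_div_iff₀ (by positivity) (by positivity)]
    nlinarith [hw2]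
  have hw34 : 1/w ≤ 3/4 := by
    rw [div_le_div_iff₀ hw0 (by norm_num)]
    nlinarith [hw2]
  obtain ⟨u, hudef⟩ : ∃ u : ℝ, u = 1/w := ⟨_, rfl⟩
  have hu0 : 0 < u := by rw [hudef]; positivity
  have hu34 : u ≤ 3/4 := hudef ▸ hw34
  have hexpo' : Real.exp (Real.log (1+v) * w) ≤ Real.exp ((3/2)*u) := by
    apply Real.exp_le_exp.mpr
    refine hexpo.trans (le_of_eq ?_)
    rw [hudef]; field_simp
  have hconv := convexOn_exp.2 (Set.mem_univ (0:ℝ)) (Set.mem_univ ((9:ℝ)/8))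
      (by nlinarith : (0:ℝ) ≤ 1 - (4/3)*u) (by positivity : (0:ℝ) ≤ (4/3)*u) (by ring)
  simp only [smul_eq_mul, mul_zero, zero_add, Real.exp_zero] at hconv
  have he98 : Real.exp ((9:ℝ)/8) ≤ 13/4 := by
    have hsplit : Real.exp ((9:ℝ)/8) = Real.exp 1 * Real.exp ((1:ℝ)/8) := by
      rw [← Real.exp_add]; norm_num
    rw [hsplit]
    have h1 : Real.exp ((1:ℝ)/8) ≤ 1/(1 - 1/8) :=
      Real.exp_bound_div_one_sub_of_interval (by norm_num) (by norm_num)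
    have h2 : Real.exp 1 ≤ 2.7182818286 := Real.exp_one_lt_d9.le
    nlinarith [Real.exp_pos ((1:ℝ)/8), Real.exp_pos 1]
  have h32 : (3:ℝ)/2*u = (4/3)*u*(9/8) := by ring
  calc Real.exp (Real.log (1+v) * w) ≤ Real.exp ((3/2)*u) := hexpo'
    _ = Real.exp ((4/3)*u*(9/8)) := by rw [h32]
    _ ≤ (1 - (4/3)*u) + (4/3)*u * Real.exp ((9:ℝ)/8) := by
        refine hconv.trans_eq ?_
        ring
    _ ≤ 1 + 3*u := by nlinarith
    _ = 1 + 3/w := by rw [hudef]; ring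


theorem stmt_10 (n t s : ℕ) (hn : 0 < n) (ht : 0 < t) (hs : 0 < s)
    (θ : ℝ) (hθ : θ ∈ Set.Ioc (0:ℝ) 1) (htθ : (t : ℝ) = θ * n)
    (α : ℝ) (hα : α ∈ Set.Ioc (0:ℝ) (1/2))
    (p : ℝ) (hp : p ∈ Set.Ioo (0:ℝ) 1) (q : ℝ) (hq : q = 1 - p)
    (hsα : 2 ≤ s * α) (hnq : s * α ≤ n * q)
    (ξ : ℝ) (hξ : ξ ∈ Set.Icc 0 (3 * α * Real.sqrt (θ * s * (1 - α))))
    (f : ℕ → ℕ → ℝ → ℝ)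
    (hf : ∀ k t p, f k t p = (t.choose k : ℝ) * p ^ k * (1 - p) ^ (t - k))
    (k : ℕ) (hk1 : t * p - ξ * Real.sqrt (t * q) ≤ (k : ℝ)) (hk2 : k ≤ t) :
    f k t p / f k t (p + 1 / n) ≤
      (Real.exp 1 + 3 / (s * α)) ^ θ *
        (1 + 3 / Real.sqrt (s * α)) ^ (Real.sqrt θ * ξ) := by
  obtain ⟨hθ0, hθ1⟩ := hθ
  obtain ⟨hα0, hα1⟩ := hα
  obtain ⟨hp0, hp1⟩ := hp
  obtain ⟨hξ0, -⟩ := hξ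
  have hq0 : 0 < q := by rw [hq]; linarith
  have hnR : (0:ℝ) < n := by exact_mod_cast hn
  set x : ℝ := (n:ℝ) * q with hxdef
  set y : ℝ := (s:ℝ) * α with hydef
  have hyx : y ≤ x := hnq
  have hy2 : 2 ≤ y := hsα
  have hx2 : 2 ≤ x := le_trans hy2 hyx
  have hy0 : (0:ℝ) < y := by linarith
  have hx0 : (0:ℝ) < x := by linarith
  -- primed probabilities
  have hq'0 : 0 < q - 1/n := by
    have : 1/(n:ℝ) < q := by
      rw [div_lt_iff₀ hnR]
      nlinarith
    linarith
  have hp'0 : 0 < p + 1/n := by positivity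
  have h1p' : 1 - (p + 1/(n:ℝ)) = q - 1/n := by rw [hq]; ring
  have hp'1 : p + 1/(n:ℝ) < 1 := by nlinarith [hq'0, h1p']
  have hC : (0:ℝ) < (t.choose k : ℝ) := by
    exact_mod_cast Nat.choose_pos hk2
  -- rewrite the ratio
  have hratio : f k t p / f k t (p + 1/n) =
      (p/(p + 1/n))^k * (q/(q - 1/n))^(t - k) := by
    rw [hf, hf, ← hq, h1p']
    have e1 : (t.choose k:ℝ) * p ^ k * q ^ (t-k) = (t.choose k:ℝ) * (p ^ k * q ^ (t-k)) := by
      ring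
    have e2 : (t.choose k:ℝ) * (p + 1/(n:ℝ)) ^ k * (q - 1/(n:ℝ)) ^ (t-k)
        = (t.choose k:ℝ) * ((p + 1/(n:ℝ)) ^ k * (q - 1/(n:ℝ)) ^ (t-k)) := by ring
    rw [e1, e2, mul_div_mul_left _ _ hC.ne', div_pow, div_pow, div_mul_div_comm]
  rw [hratio]
  have hb1 : 1 ≤ q/(q - 1/(n:ℝ)) := by
    rw [le_div_iff₀ hq'0]
    have : (0:ℝ) < 1/(n:ℝ) := by positivity
    linarith
  have hb0 : 0 < q/(q - 1/(n:ℝ)) := lt_of_lt_of_le one_pos hb1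
  -- first factor ≤ 1
  have hfac1 : (p/(p + 1/(n:ℝ)))^k ≤ 1 := by
    apply pow_le_one₀ (by positivity)
    rw [div_le_one hp'0]
    have : (0:ℝ) < 1/(n:ℝ) := by positivity
    linarith
  have hstep0 : (p/(p + 1/(n:ℝ)))^k * (q/(q - 1/n))^(t - k) ≤ (q/(q - 1/n))^(t - k) := by
    apply mul_le_of_le_one_left (by positivity) hfac1
  refine hstep0.trans ?_
  -- switch to rpow with real exponent
  set b : ℝ := q/(q - 1/(n:ℝ)) with hbdef
  have hbx : b = x/(x-1) := by
    rw [hbdef, hxdef]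
    rw [div_eq_div_iff hq'0.ne' (by nlinarith : ((n:ℝ)*q - 1) ≠ 0)]
    field_simp
  have hcast : ((t - k : ℕ) : ℝ) = (t:ℝ) - k := by
    rw [Nat.cast_sub hk2]
  have hE : ((t - k : ℕ) : ℝ) ≤ θ*x + (Real.sqrt θ * ξ) * Real.sqrt x := by
    rw [hcast]
    have htq : (t:ℝ)*q = θ*x := by rw [htθ, hxdef]; ring
    have hsq : Real.sqrt ((t:ℝ)*q) = Real.sqrt θ * Real.sqrt x := by
      rw [htq, Real.sqrt_mul hθ0.le]
    have h1 : (t:ℝ) - k ≤ (t:ℝ)*q + ξ * Real.sqrt ((t:ℝ)*q) := by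
      have : (t:ℝ)*q = (t:ℝ) - t*p := by rw [hq]; ring
      nlinarith [hk1]
    rw [hsq, htq] at h1
    refine h1.trans (le_of_eq (by ring))
  have hrpow : b^(t-k) = b ^ (((t-k:ℕ)):ℝ) := (Real.rpow_natCast b (t-k)).symm
  rw [hrpow]
  have hstep1 : b ^ (((t-k:ℕ)):ℝ) ≤ b ^ (θ*x + (Real.sqrt θ * ξ) * Real.sqrt x) :=
    Real.rpow_le_rpow_of_exponent_le hb1 hE
  refine hstep1.trans ?_
  have hsplit : b ^ (θ*x + (Real.sqrt θ * ξ) * Real.sqrt x) =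
      (b ^ (x:ℝ)) ^ θ * (b ^ Real.sqrt x) ^ (Real.sqrt θ * ξ) := by
    rw [Real.rpow_add hb0, mul_comm θ x, ← Real.rpow_mul hb0.le,
      mul_comm (Real.sqrt θ * ξ) (Real.sqrt x), ← Real.rpow_mul hb0.le]
  rw [hsplit]
  -- bound each factor
  have hKL1 : b ^ (x:ℝ) ≤ Real.exp 1 + 3/x := by rw [hbx]; exact aux_KL1 hx2
  have hKL2 : b ^ Real.sqrt x ≤ 1 + 3/Real.sqrt x := by rw [hbx]; exact aux_KL2 hx2
  have h3xy : 3/x ≤ 3/y := by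
    apply div_le_div_of_nonneg_left (by norm_num) hy0 hyx
  have hsxy : 3/Real.sqrt x ≤ 3/Real.sqrt y := by
    apply div_le_div_of_nonneg_left (by norm_num) (Real.sqrt_pos.mpr hy0)
    exact Real.sqrt_le_sqrt hyx
  have hfac1' : (b ^ (x:ℝ)) ^ θ ≤ (Real.exp 1 + 3/y) ^ θ := by
    apply Real.rpow_le_rpow (Real.rpow_nonneg hb0.le _) _ hθ0.le
    refine hKL1.trans ?_
    linarith
  have hfac2' : (b ^ Real.sqrt x) ^ (Real.sqrt θ * ξ) ≤
      (1 + 3/Real.sqrt y) ^ (Real.sqrt θ * ξ) := by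
    apply Real.rpow_le_rpow (Real.rpow_nonneg hb0.le _) _
      (mul_nonneg (Real.sqrt_nonneg θ) hξ0)
    refine hKL2.trans ?_
    linarith
  have hnn1 : 0 ≤ (b ^ (x:ℝ)) ^ θ := Real.rpow_nonneg (Real.rpow_nonneg hb0.le _) _
  have hnn2 : 0 ≤ (Real.exp 1 + 3/y) ^ θ := by
    apply Real.rpow_nonneg
    positivity
  calc (b ^ (x:ℝ)) ^ θ * (b ^ Real.sqrt x) ^ (Real.sqrt θ * ξ)
      ≤ (Real.exp 1 + 3/y) ^ θ * (1 + 3/Real.sqrt y) ^ (Real.sqrt θ * ξ) := by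
        apply mul_le_mul hfac1' hfac2'
          (Real.rpow_nonneg (Real.rpow_nonneg hb0.le _) _) hnn2
    _ = (Real.exp 1 + 3 / (s * α)) ^ θ * (1 + 3 / Real.sqrt (s * α)) ^ (Real.sqrt θ * ξ) := by
        rw [hydef]
end

section
/- Let K ≥ 1, β ∈ [0,1), q a probability vector in ℝ^K, Q[y',y] = (1-β)𝟙[y'=y] + β·q(y'), and ℓ : Fin K → ℝ with |ℓ(y')| ≤ 1 for all y'. Define ℓ̃(y) = Σ_{y'} Q⁻¹[y',y]·ℓ(y'). Then |ℓ̃(y)| ≤ √2·K/(1-β) for all y. -/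
open Finset

theorem stmt_18 (K : ℕ) (hK : 1 ≤ K) (β : ℝ) (hβ0 : 0 ≤ β) (hβ1 : β < 1)
    (q : Fin K → ℝ) (hq0 : ∀ y, 0 ≤ q y) (hq1 : ∑ y, q y = 1)
    (Q : Matrix (Fin K) (Fin K) ℝ)
    (hQ : ∀ y' y, Q y' y = (1 - β) * (if y' = y then 1 else 0) + β * q y')
    (ℓ : Fin K → ℝ) (hℓ : ∀ y', |ℓ y'| ≤ 1)
    (ℓt : Fin K → ℝ) (hℓt : ∀ y, ℓt y = ∑ y', Q⁻¹ y' y * ℓ y') :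
    ∀ y, |ℓt y| ≤ Real.sqrt 2 * K / (1 - β) := by
  intro y
  have h1β : (0:ℝ) < 1 - β := by linarith
  set M : Matrix (Fin K) (Fin K) ℝ :=
    fun y' y => ((if y' = y then 1 else 0) - β * q y') / (1 - β) with hMdef
  have hsumM : ∀ j, ∑ k, M k j = 1 := by
    intro j
    simp only [hMdef]
    rw [← Finset.sum_div, Finset.sum_sub_distrib, ← Finset.mul_sum, hq1,
      Finset.sum_ite_eq' Finset.univ j (fun _ => (1:ℝ))]
    simp only [Finset.mem_univ, if_true, mul_one]
    field_simp
  have hQM : Q * M = 1 := by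
    ext i j
    rw [Matrix.mul_apply]
    have hterm : ∀ k, Q i k * M k j =
        (1 - β) * ((if i = k then 1 else 0) * M k j) + β * q i * M k j := by
      intro k; rw [hQ]; ring
    rw [Finset.sum_congr rfl fun k _ => hterm k, Finset.sum_add_distrib,
      ← Finset.mul_sum, ← Finset.mul_sum]
    simp only [ite_mul, one_mul, zero_mul]
    rw [Finset.sum_ite_eq Finset.univ i (fun k => M k j), hsumM j]
    simp only [Finset.mem_univ, if_true, mul_one, hMdef, Matrix.one_apply]
    rw [mul_div_cancel₀ _ (ne_of_gt h1β)]
    by_cases h : i = j <;> simp [h]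
  have hinv : Q⁻¹ = M := Matrix.inv_eq_right_inv hQM
  rw [hℓt, hinv]
  have hterm : ∀ y', |M y' y * ℓ y'| ≤ 1 / (1 - β) := by
    intro y'
    have hq1' : q y' ≤ 1 := by
      have := Finset.single_le_sum (fun i _ => hq0 i) (Finset.mem_univ y')
      linarith [hq1 ▸ this]
    have hbq0 : 0 ≤ β * q y' := mul_nonneg hβ0 (hq0 y')
    have hbq1 : β * q y' ≤ 1 := mul_le_one₀ hβ1.le (hq0 y') hq1'
    have hnum : |(if y' = y then (1:ℝ) else 0) - β * q y'| ≤ 1 := by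
      rw [abs_le]; split_ifs with h <;> constructor <;> linarith
    calc |M y' y * ℓ y'| = |M y' y| * |ℓ y'| := abs_mul _ _
      _ ≤ |M y' y| * 1 := by
          exact mul_le_mul_of_nonneg_left (hℓ y') (abs_nonneg _)
      _ = |(if y' = y then (1:ℝ) else 0) - β * q y'| / (1 - β) := by
          rw [mul_one, hMdef]; rw [abs_div, abs_of_pos h1β]
      _ ≤ 1 / (1 - β) := by gcongr
  calc |∑ y', M y' y * ℓ y'| ≤ ∑ y', |M y' y * ℓ y'| := Finset.abs_sum_le_sum_abs _ _
    _ ≤ ∑ _y' : Fin K, 1 / (1 - β) := Finset.sum_le_sum fun y' _ => hterm y'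
    _ = K / (1 - β) := by simp [div_eq_mul_inv]
    _ ≤ Real.sqrt 2 * K / (1 - β) := by
        have h2 : (1:ℝ) ≤ Real.sqrt 2 := by
          rw [show (1:ℝ) = Real.sqrt 1 by simp]
          exact Real.sqrt_le_sqrt (by norm_num)
        have hKc : (0:ℝ) ≤ (K:ℝ) := Nat.cast_nonneg K
        have hle : (K:ℝ) ≤ Real.sqrt 2 * K := by nlinarith
        gcongr
end
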